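/- In the forcing poset P_b (for b ∈ ω^ω), the generic pair (J_gen, h_gen) ∈ 𝕀 × ∏b satisfies: for every f ∈ ∏b in the ground model, f ⊏• (J_gen, h_gen). Equivalently, for each ground-model f ∈ ∏b and each n, the set of conditions (s,t,F) with f ∈ F and |s| > n is dense in P_b. -/

import Mathlib

open Set Filter

/-- `∏ b` for `b ∈ ω^ω`. -/
abbrev Pb (b : ℕ → ℕ) : Type := {f : ℕ → ℕ // ∀ n, f n < b n}

/-- A condition `(s, t, F)` of the forcing `P_b`: `s` is a strictly increasing
finite sequence of naturals with `s 0 > 0`, `t` is a finite initial segment of a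
member of `∏b`, and `F` is a finite subset of `∏b`. -/
structure PbCond (b : ℕ → ℕ) : Type where
  s : List ℕ
  t : List ℕ
  F : Finset (Pb b)
  hs : List.Chain' (· < ·) s
  hs0 : ∀ h : 0 < s.length, 0 < s.get ⟨0, h⟩
  ht : ∀ i, ∀ h : i < t.length, t.get ⟨i, h⟩ < b i

/-- The order of `P_b`: `q ≤ p` iff `p.s ⊆ q.s`, `p.t ⊆ q.t`, `p.F ⊆ q.F`, and for
every `f ∈ p.F` and every new index `n` of `q.s` there is
`k ∈ [q.s (n-1), q.s n)` (with `q.s (-1) := 0`) such that `f k = q.t k`. -/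
def PbLE (b : ℕ → ℕ) (q p : PbCond b) : Prop :=
  p.s <+: q.s ∧ p.t <+: q.t ∧ p.F ⊆ q.F ∧
  ∀ f ∈ p.F, ∀ n, p.s.length ≤ n → ∀ hn : n < q.s.length,
    ∃ k, ∃ hk : k < q.t.length,
      (if h : n = 0 then 0 else q.s.get ⟨n - 1, by omega⟩) ≤ k ∧
      k < q.s.get ⟨n, hn⟩ ∧ f.1 k = q.t.get ⟨k, hk⟩

/-- Density in `P_b`: for each ground-model `f ∈ ∏b` and each `n`, the set of
conditions `(s, t, F)` with `f ∈ F` and `|s| > n` is dense in `P_b`.  (Hence the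
generic pair `(J_gen, h_gen) ∈ 𝕀 × ∏b` satisfies `f ⊏• (J_gen, h_gen)` for every
ground-model `f ∈ ∏b`.) -/
theorem stmt17 (b : ℕ → ℕ) (hb : ∀ n, 0 < b n)
    (f : Pb b) (n : ℕ) (p : PbCond b) :
    ∃ q : PbCond b, PbLE b q p ∧ f ∈ q.F ∧ n < q.s.length := by
  classical
  set F' : Finset (Pb b) := insert f p.F with hF'
  set gs : List (Pb b) := F'.toList with hgs
  set m : ℕ := gs.length with hm
  have hm0 : 0 < m := by
    rw [hm, hgs, Finset.length_toList]
    exact Finset.card_pos.mpr ⟨f, Finset.mem_insert_self f p.F⟩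
  set L : ℕ := p.t.length with hL
  set lastS : ℕ := p.s.getLast?.getD 0 with hlastS
  set base : ℕ := max lastS L with hbase
  have hLbase : L ≤ base := le_max_right _ _
  have hlast : lastS ≤ base := le_max_left _ _
  set total : ℕ := base + (n+1)*m with htotal
  have hbtot : base ≤ total := Nat.le_add_right _ _
  have hLtot : L ≤ total := le_trans hLbase hbtot
  set T : ℕ → ℕ := fun k => if k < base then 0 else (gs.getD ((k - base) % m) f).1 k with hT
  set snew : List ℕ := List.ofFn (fun j : Fin (n+1) => base + (j+1)*m) with hsnew
  set tnew : List ℕ := List.ofFn (fun i : Fin (total - L) => T (L + i)) with htnew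
  have hsnlen : snew.length = n+1 := by simp [hsnew]
  have htnlen : tnew.length = total - L := by simp [htnew]
  have hqtlen : (p.t ++ tnew).length = total := by
    simp only [List.length_append, htnlen, ← hL]; omega
  have hqslen : (p.s ++ snew).length = p.s.length + (n+1) := by simp [hsnlen]
  have hsget : ∀ j (h : j < snew.length), snew[j] = base + (j+1)*m := by
    intro j h
    simp only [hsnew, List.getElem_ofFn, Fin.val_mk]
  have htget : ∀ k (h : k < (p.t ++ tnew).length), L ≤ k → (p.t ++ tnew)[k] = T k := by
    intro k h hk
    rw [List.getElem_append_right hk]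
    simp only [htnew]
    rw [List.getElem_ofFn]
    congr 1
    simp only [← hL]
    omega
  have hlastS' : ∀ i (hi : i < p.s.length), i = p.s.length - 1 → p.s[i] = lastS := by
    intro i hi hieq
    subst hieq
    have hne : p.s ≠ [] := List.length_pos_iff.mp (by omega)
    rw [hlastS, List.getLast?_eq_getLast hne, Option.getD_some,
      List.getLast_eq_getElem]
  have hchain : List.Chain' (· < ·) (p.s ++ snew) := by
    show List.IsChain (· < ·) (p.s ++ snew)
    rw [List.isChain_append]
    refine ⟨p.hs, ?_, ?_⟩
    · rw [List.isChain_iff_getElem]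
      intro i h
      rw [hsnlen] at h
      simp only [List.get_eq_getElem, hsget]
      have : (i+1+1)*m = (i+1)*m + m := by ring
      omega
    · intro x hx y hy
      have hne : p.s ≠ [] := by
        intro h; rw [h] at hx; simp at hx
      have hxl : x = lastS := by
        rw [List.getLast?_eq_getLast hne, Option.mem_def, Option.some_inj] at hx
        rw [← hx, List.getLast_eq_getElem]
        exact hlastS' _ (by have := List.length_pos_iff.mpr hne; omega) rfl
      have hyl : y = base + (0+1)*m := by
        have h0 : snew ≠ [] := by
          intro h
          have := hsnlen; rw [h] at this; simp at this
        rw [List.head?_eq_head h0, Option.mem_def, Option.some_inj] at hy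
        rw [← hy, List.head_eq_getElem, hsget]
      omega
  have hs0new : ∀ h : 0 < (p.s ++ snew).length, 0 < (p.s ++ snew).get ⟨0, h⟩ := by
    intro h
    simp only [List.get_eq_getElem]
    by_cases hps : 0 < p.s.length
    · rw [List.getElem_append_left hps]
      exact p.hs0 hps
    · rw [List.getElem_append_right (by omega), hsget]
      positivity
  have htnew' : ∀ i, ∀ h : i < (p.t ++ tnew).length, (p.t ++ tnew).get ⟨i, h⟩ < b i := by
    intro i h
    simp only [List.get_eq_getElem]
    by_cases hiL : i < L
    · rw [List.getElem_append_left hiL]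
      exact p.ht i hiL
    · rw [htget i h (by omega), hT]
      by_cases hib : i < base
      · simp only [hib, if_true]
        exact hb i
      · simp only [hib, if_false]
        exact (gs.getD ((i - base) % m) f).2 i
  refine ⟨⟨p.s ++ snew, p.t ++ tnew, F', hchain, hs0new, htnew'⟩, ⟨List.prefix_append _ _,
    List.prefix_append _ _, Finset.subset_insert _ _, ?_⟩,
    Finset.mem_insert_self f p.F, by simp only [hqslen]; omega⟩
  -- matching clause
  intro f' hf' n' hge hlt
  simp only [hqslen] at hlt
  set j : ℕ := n' - p.s.length with hj
  have hjn : j < n + 1 := by omega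
  have hf'gs : f' ∈ gs := by
    rw [hgs, Finset.mem_toList, hF']
    exact Finset.mem_insert_of_mem hf'
  set i : ℕ := gs.idxOf f' with hi
  have him : i < m := List.idxOf_lt_length_iff.mpr hf'gs
  set k : ℕ := base + j*m + i with hk
  have hjm : (j+1)*m = j*m + m := by ring
  have hjm' : (j+1)*m ≤ (n+1)*m := Nat.mul_le_mul_right m (by omega)
  have hkt : k < (p.t ++ tnew).length := by
    rw [hqtlen, htotal]
    omega
  have hkb : base ≤ k := by omega
  refine ⟨k, hkt, ?_, ?_, ?_⟩
  · -- prev ≤ k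
    by_cases h0 : n' = 0
    · rw [dif_pos h0]; omega
    · rw [dif_neg h0]
      simp only [List.get_eq_getElem]
      show (p.s ++ snew)[n' - 1]'(by simp only [hqslen]; omega) ≤ k
      by_cases hcase : n' - 1 < p.s.length
      · rw [List.getElem_append_left hcase]
        rw [hlastS' _ hcase (by omega)]
        omega
      · rw [List.getElem_append_right (by omega), hsget]
        have h1 : n' - 1 - p.s.length + 1 = j := by omega
        rw [h1]
        omega
  · -- k < s n'
    simp only [List.get_eq_getElem]
    show k < (p.s ++ snew)[n']'(by simp only [hqslen]; omega)
    rw [List.getElem_append_right (by omega), hsget]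
    have h2 : n' - p.s.length = j := rfl
    rw [h2]
    omega
  · -- f' k = t k
    simp only [List.get_eq_getElem]
    show f'.1 k = (p.t ++ tnew)[k]'hkt
    rw [htget k hkt (by omega), hT]
    have hkb' : ¬ k < base := by omega
    simp only [hkb', if_false]
    have h1 : k - base = i + j * m := by omega
    have hgd : gs.getD ((k - base) % m) f = f' := by
      rw [h1, Nat.add_mul_mod_self_right, Nat.mod_eq_of_lt him,
        List.getD_eq_getElem _ _ (by omega : i < gs.length)]
      exact List.getElem_idxOf (by omega)
    rw [hgd]
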